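/- Suppose the observation table over (S', E) is closed and consistent, let H be its hypothesis T-automaton with language L_H, let z ∈ A* satisfy L_H(z) ≠ L(z), and let S = S' ∪ prefixes(z), with the observation table extended to S. Then there exist u ∈ A* and a ∈ A such that ua is a prefix of z, and there exists U ∈ T(S') such that row_t(u) = row_t♯(U) and row_b(u)(a) ≠ row_b♯(U)(a). (In particular, adding all prefixes of a counterexample to S creates a consistency defect.) -/

import Mathlib

/-- A monad on the category of sets, given by an endofunctor `T` with unit `pure` (η)
and multiplication `mult` (μ), satisfying functoriality, naturality and the monad laws. -/
structure SetMonad where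
  T : Type → Type
  map : {X Y : Type} → (X → Y) → T X → T Y
  pure : {X : Type} → X → T X
  mult : {X : Type} → T (T X) → T X
  map_id : ∀ {X : Type} (t : T X), map id t = t
  map_comp : ∀ {X Y Z : Type} (g : Y → Z) (f : X → Y) (t : T X),
    map (g ∘ f) t = map g (map f t)
  pure_natural : ∀ {X Y : Type} (f : X → Y) (x : X), map f (pure x) = pure (f x)
  mult_natural : ∀ {X Y : Type} (f : X → Y) (t : T (T X)),
    map f (mult t) = mult (map (map f) t)
  mult_pure : ∀ {X : Type} (t : T X), mult (pure t) = t
  mult_map_pure : ∀ {X : Type} (t : T X), mult (map pure t) = t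
  mult_assoc : ∀ {X : Type} (t : T (T (T X))), mult (mult t) = mult (map mult t)

/-- An Eilenberg-Moore algebra `(carrier, str)` for the monad `M`. -/
structure AlgOver (M : SetMonad) where
  carrier : Type
  str : M.T carrier → carrier
  str_pure : ∀ x, str (M.pure x) = x
  str_mult : ∀ t, str (M.mult t) = str (M.map str t)

/-- `f` is a `T`-algebra homomorphism from `X` to `Y`: `f ∘ h = k ∘ T f`. -/
def IsHom (M : SetMonad) (X Y : AlgOver M) (f : X.carrier → Y.carrier) : Prop :=
  ∀ t : M.T X.carrier, f (X.str t) = Y.str (M.map f t)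

/-- The free `T`-algebra `(T U, μ_U)` on a set `U`. -/
def freeAlg (M : SetMonad) (U : Type) : AlgOver M where
  carrier := M.T U
  str := M.mult
  str_pure := M.mult_pure
  str_mult := M.mult_assoc

/-- The free `T`-extension `g♯ = v ∘ T g : T U → V` of a function `g : U → V`
into a `T`-algebra `(V, v)`. -/
def extAlg (M : SetMonad) {U : Type} (V : AlgOver M) (g : U → V.carrier) :
    M.T U → V.carrier :=
  fun t => V.str (M.map g t)

/-- The pointwise `T`-algebra structure on `V^A` for a `T`-algebra `V`. -/
def powAlg (M : SetMonad) (A : Type) (V : AlgOver M) : AlgOver M where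
  carrier := A → V.carrier
  str := fun t a => V.str (M.map (fun g => g a) t)
  str_pure := by
    intro x
    funext a
    show V.str (M.map (fun g => g a) (M.pure x)) = x a
    rw [M.pure_natural]
    exact V.str_pure _
  str_mult := by
    intro t
    funext a
    show V.str (M.map (fun g => g a) (M.mult t)) =
      V.str (M.map (fun g => g a) (M.map (fun t a => V.str (M.map (fun g => g a) t)) t))
    rw [M.mult_natural, V.str_mult, ← M.map_comp, ← M.map_comp]
    rfl

/-- The top part of the observation table: `row_t : S → O^E`, `row_t(s)(e) = L(se)`. -/
def rowT (A : Type) {Oc : Type} (L : List A → Oc) (S E : Set (List A)) :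
    ↥S → ↥E → Oc :=
  fun s e => L (s.1 ++ e.1)

/-- The bottom part of the observation table: `row_b : S → (O^E)^A`,
`row_b(s)(a)(e) = L(sae)`. -/
def rowB (A : Type) {Oc : Type} (L : List A → Oc) (S E : Set (List A)) :
    ↥S → A → ↥E → Oc :=
  fun s a e => L (s.1 ++ a :: e.1)

/-- The free `T`-extension `row_t♯ : T(S) → O^E`. -/
def rowTs (M : SetMonad) (A : Type) (O : AlgOver M) (L : List A → O.carrier)
    (S E : Set (List A)) : M.T ↥S → ↥E → O.carrier :=
  extAlg M (powAlg M (↥E) O) (rowT A L S E)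

/-- The free `T`-extension `row_b♯ : T(S) → (O^E)^A`. -/
def rowBs (M : SetMonad) (A : Type) (O : AlgOver M) (L : List A → O.carrier)
    (S E : Set (List A)) : M.T ↥S → A → ↥E → O.carrier :=
  extAlg M (powAlg M A (powAlg M (↥E) O)) (rowB A L S E)

/-- if `z` is a counterexample for the hypothesis built from the closed
and consistent table over `(S', E)`, then after adding all prefixes of `z` to `S'`
there is a consistency defect: some prefix `ua` of `z` and `U ∈ T(S')` satisfy
`row_t(u) = row_t♯(U)` but `row_b(u)(a) ≠ row_b♯(U)(a)`. -/
theorem stmt7 (M : SetMonad) (A : Type) [Finite A] (O : AlgOver M)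
    (L : List A → O.carrier) (S' E : Set (List A)) (hS'fin : S'.Finite)
    (hEfin : E.Finite) (hS'e : [] ∈ S') (hEe : [] ∈ E)
    -- the table over (S', E) is closed and consistent
    (hclosed : ∀ (U : M.T ↥S') (a : A), ∃ U' : M.T ↥S',
      rowTs M A O L S' E U' = rowBs M A O L S' E U a)
    (hcons : ∀ U₁ U₂ : M.T ↥S', rowTs M A O L S' E U₁ = rowTs M A O L S' E U₂ →
      rowBs M A O L S' E U₁ = rowBs M A O L S' E U₂)
    -- the hypothesis automaton H on the state space img(row_t♯):
    (δH : ↥(Set.range (rowTs M A O L S' E)) → A → ↥(Set.range (rowTs M A O L S' E)))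
    (hδH : ∀ (U : M.T ↥S') (a : A)
      (h : rowTs M A O L S' E U ∈ Set.range (rowTs M A O L S' E)),
      (δH ⟨rowTs M A O L S' E U, h⟩ a).1 = rowBs M A O L S' E U a)
    (initH : ↥(Set.range (rowTs M A O L S' E)))
    (hinitH : initH.1 = rowT A L S' E ⟨[], hS'e⟩)
    -- z is a counterexample: L_H(z) ≠ L(z)
    (z : List A)
    (hz : (List.foldl δH initH z).1 ⟨[], hEe⟩ ≠ L z)
    -- S extends S' with all prefixes of z
    (S : Set (List A)) (hS : S = S' ∪ {w | w <+: z}) :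
    ∃ (u : List A) (a : A), (u ++ [a]) <+: z ∧
      ∃ U : M.T ↥S',
        (fun e : ↥E => L (u ++ e.1)) = rowTs M A O L S' E U ∧
        (fun e : ↥E => L (u ++ a :: e.1)) ≠ rowBs M A O L S' E U a := by
  by_contra hcon
  push_neg at hcon
  have key : ∀ u : List A, u <+: z →
      (List.foldl δH initH u).1 = fun e : ↥E => L (u ++ e.1) := by
    intro u
    induction u using List.reverseRecOn with
    | nil =>
      intro _
      simp only [List.foldl_nil, hinitH]
      funext e
      simp [rowT]
    | append_singleton u a ih =>
      intro hpre
      have hu : u <+: z := (List.prefix_append u [a]).trans hpre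
      have h1 := ih hu
      obtain ⟨U, hU⟩ := (List.foldl δH initH u).2
      have hstate : List.foldl δH initH u = ⟨rowTs M A O L S' E U, Set.mem_range_self U⟩ :=
        Subtype.ext hU.symm
      rw [List.foldl_append, List.foldl_cons, List.foldl_nil, hstate, hδH U a]
      have hrt : (fun e : ↥E => L (u ++ e.1)) = rowTs M A O L S' E U := by
        rw [← h1, hU]
      rw [← hcon u a hpre U hrt]
      funext e
      simp
  have hk := key z (List.prefix_refl z)
  apply hz
  rw [hk]
  simp
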